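/- For the Erdős–Taylor sequence with a_n = n+1 (b₁ = 1, b_{n+1} = (n+1) b_n + 1), the group G₂(b) = {t ∈ ℝ/ℤ : ∑_n ‖b_n t‖² < ∞} is uncountable, while G₁(b) = {0}. -/

import Mathlib

/-- `G_p(b)` inside the circle `ℝ/ℤ`; the norm on `AddCircle (1:ℝ)` is the
distance to the nearest integer. -/
noncomputable def Gp (b : ℕ → ℕ) (p : ℝ) : Set (AddCircle (1:ℝ)) :=
  {t | Summable (fun n => ‖b n • t‖ ^ p)}

namespace ET

/-- numerator sequence -/
def cseq (δ : ℕ → ℕ) : ℕ → ℕ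
  | 0 => 0
  | n + 1 => (n + 1) * cseq δ n + δ n

/-- summand -/
noncomputable def fseq (b δ : ℕ → ℕ) (m : ℕ) : ℝ :=
  if m = 0 then 0 else ((δ m * b m : ℝ) - cseq δ m) / (b m * b (m + 1))

/-- the real number attached to a 0/1 sequence `δ` -/
noncomputable def tval (b δ : ℕ → ℕ) : ℝ := ∑' m, fseq b δ m


lemma abs_tsum_le (f : ℕ → ℝ) (hs : Summable f) : |∑' m, f m| ≤ ∑' m, |f m| := by
  have h := norm_tsum_le_tsum_norm (f := f) ?_
  · simpa [Real.norm_eq_abs] using h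
  · simpa [Real.norm_eq_abs] using hs.abs

lemma cseq_congr' {δ δ' : ℕ → ℕ} {k : ℕ} (h : ∀ m < k, δ m = δ' m) :
    ∀ n ≤ k, cseq δ n = cseq δ' n := by
  intro n hn
  induction n with
  | zero => rfl
  | succ n ih =>
    simp only [cseq]
    rw [ih (by omega), h n (by omega)]

set_option linter.unusedSectionVars false

section lemmas

variable {b : ℕ → ℕ} (hb1 : b 1 = 1)
    (hrec : ∀ n, 1 ≤ n → b (n + 1) = (n + 1) * b n + 1) (hb0 : b 0 = 1)

include hb1 hrec hb0

lemma bpos : ∀ n, 0 < b n := by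
  intro n
  induction n with
  | zero => rw [hb0]; norm_num
  | succ n ih =>
    rcases Nat.eq_zero_or_pos n with h | h
    · subst h; rw [hb1]; norm_num
    · rw [hrec n h]; positivity

lemma bpow : ∀ m, 2 ^ m ≤ b (m + 1) := by
  intro m
  induction m with
  | zero => rw [pow_zero, hb1]
  | succ m ih =>
    rw [hrec (m + 1) (by omega)]
    have hp := bpos hb1 hrec hb0 (m + 1)
    have h2 : 2 * b (m + 1) ≤ (m + 1 + 1) * b (m + 1) + 1 := by nlinarith
    calc 2 ^ (m + 1) = 2 * 2 ^ m := by ring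
    _ ≤ 2 * b (m + 1) := by omega
    _ ≤ _ := h2

lemma bpown (n : ℕ) (hn : 1 ≤ n) : ∀ m, 2 ^ m * b (n + 1) ≤ b (m + n + 1) := by
  intro m
  induction m with
  | zero => simp
  | succ m ih =>
    have h1 : b (m + 1 + n + 1) = (m + n + 1 + 1) * b (m + n + 1) + 1 := by
      have := hrec (m + n + 1) (by omega)
      convert this using 2 <;> omega
    have h2 : 2 * b (m + n + 1) ≤ (m + n + 1 + 1) * b (m + n + 1) + 1 := by nlinarith
    calc 2 ^ (m + 1) * b (n + 1) = 2 * (2 ^ m * b (n + 1)) := by ring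
    _ ≤ 2 * b (m + n + 1) := by omega
    _ ≤ _ := by omega

variable {δ : ℕ → ℕ} (hδ : ∀ m, δ m ≤ 1) (hδ0 : δ 0 = 0)

include hδ

lemma cle : ∀ n, cseq δ n ≤ b n := by
  intro n
  induction n with
  | zero => simp [cseq, hb0]
  | succ n ih =>
    rcases Nat.eq_zero_or_pos n with h | h
    · subst h
      simp only [cseq]
      have h1 := hδ 0
      have h2 : b (0 + 1) = 1 := hb1
      omega
    · rw [hrec n h]
      simp only [cseq]
      have h1 : (n + 1) * cseq δ n ≤ (n + 1) * b n := Nat.mul_le_mul_left _ ih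
      have := hδ n
      omega

lemma fabs : ∀ m, |fseq b δ m| ≤ 1 / b (m + 1) := by
  intro m
  rcases Nat.eq_zero_or_pos m with h | h
  · subst h
    have h0 : fseq b δ 0 = 0 := by simp [fseq]
    rw [h0, abs_zero]
    positivity
  · rw [fseq, if_neg (by omega)]
    have hbm : (0:ℝ) < b m := by exact_mod_cast bpos hb1 hrec hb0 m
    have hbm1 : (0:ℝ) < b (m + 1) := by exact_mod_cast bpos hb1 hrec hb0 (m + 1)
    have hc : (cseq δ m : ℝ) ≤ b m := by exact_mod_cast cle hb1 hrec hb0 hδ m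
    have hc0 : (0:ℝ) ≤ (cseq δ m : ℝ) := by positivity
    have hd : (δ m : ℝ) ≤ 1 := by exact_mod_cast hδ m
    have hd0 : (0:ℝ) ≤ (δ m : ℝ) := by positivity
    have hnum : |(δ m * b m : ℝ) - cseq δ m| ≤ b m := by
      rw [abs_le]
      constructor <;> nlinarith
    rw [abs_div, abs_of_pos (show (0:ℝ) < (b m : ℝ) * b (m+1) by positivity)]
    rw [div_le_div_iff₀ (by positivity) (by positivity)]
    nlinarith

lemma fle : ∀ m, |fseq b δ m| ≤ (1/2 : ℝ) ^ m := by
  intro m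
  refine (fabs hb1 hrec hb0 hδ m).trans ?_
  have h2 : (2:ℝ) ^ m ≤ b (m + 1) := by exact_mod_cast bpow hb1 hrec hb0 m
  rw [div_pow, one_pow, one_div, one_div]
  exact inv_anti₀ (by positivity) h2

lemma fsummable : Summable (fseq b δ) := by
  apply Summable.of_norm_bounded summable_geometric_two
  intro m
  rw [Real.norm_eq_abs]
  exact fle hb1 hrec hb0 hδ m

include hδ0

lemma partial_sum : ∀ n, 1 ≤ n →
    ∑ m ∈ Finset.range n, fseq b δ m = cseq δ n / b n := by
  intro n hn
  induction n with
  | zero => omega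
  | succ n ih =>
    rcases Nat.eq_zero_or_pos n with h | h
    · subst h
      have h1 : cseq δ 1 = 0 := by simp [cseq, hδ0]
      simp [fseq, h1]
    · rw [Finset.sum_range_succ, ih h]
      have hbn : (0:ℝ) < b n := by exact_mod_cast bpos hb1 hrec hb0 n
      rw [fseq, if_neg (by omega)]
      have hb' : (b (n+1) : ℝ) = (n + 1) * b n + 1 := by
        rw [hrec n h]; push_cast; ring
      have hc' : (cseq δ (n+1) : ℝ) = (n + 1) * cseq δ n + δ n := by
        simp only [cseq]; push_cast; ring
      rw [hc', hb']
      have hne : ((n:ℝ) + 1) * b n + 1 ≠ 0 := by positivity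
      field_simp
      ring

lemma tail_bound (n : ℕ) (hn : 1 ≤ n) :
    |∑' m, fseq b δ (m + n)| ≤ 2 / b (n + 1) := by
  have hs : Summable (fun m => fseq b δ (m + n)) :=
    (summable_nat_add_iff n).2 (fsummable hb1 hrec hb0 hδ)
  have hbn1 : (0:ℝ) < b (n + 1) := by exact_mod_cast bpos hb1 hrec hb0 (n + 1)
  have hbound : ∀ m, |fseq b δ (m + n)| ≤ (1/2:ℝ) ^ m * (1 / b (n + 1)) := by
    intro m
    refine (fabs hb1 hrec hb0 hδ (m + n)).trans ?_
    have h2 : (2:ℝ) ^ m * b (n + 1) ≤ b (m + n + 1) := by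
      exact_mod_cast bpown hb1 hrec hb0 n hn m
    rw [div_pow, one_pow, one_div, one_div, one_div, ← mul_inv]
    exact inv_anti₀ (by positivity) h2
  calc |∑' m, fseq b δ (m + n)| ≤ ∑' m, |fseq b δ (m + n)| :=
        abs_tsum_le _ hs
  _ ≤ ∑' m, (1/2:ℝ) ^ m * (1 / b (n + 1)) :=
        Summable.tsum_le_tsum hbound hs.abs (summable_geometric_two.mul_right _)
  _ = 2 / b (n + 1) := by
        rw [tsum_mul_right, tsum_geometric_two]; ring

lemma key_bound (n : ℕ) (hn : 1 ≤ n) :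
    |b n * tval b δ - cseq δ n| ≤ 2 * b n / b (n + 1) := by
  have hbn : (0:ℝ) < b n := by exact_mod_cast bpos hb1 hrec hb0 n
  have hbn1 : (0:ℝ) < b (n + 1) := by exact_mod_cast bpos hb1 hrec hb0 (n + 1)
  have hsplit := (Summable.sum_add_tsum_nat_add n (fsummable hb1 hrec hb0 hδ (b := b))).symm
  have h1 : tval b δ = cseq δ n / b n + ∑' m, fseq b δ (m + n) := by
    rw [tval, hsplit, partial_sum hb1 hrec hb0 hδ hδ0 n hn]
  rw [h1]
  have h2 : (b n : ℝ) * (cseq δ n / b n + ∑' m, fseq b δ (m + n)) - cseq δ n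
      = b n * ∑' m, fseq b δ (m + n) := by field_simp; ring
  rw [h2, abs_mul, abs_of_pos hbn]
  calc (b n : ℝ) * |∑' m, fseq b δ (m + n)| ≤ b n * (2 / b (n + 1)) :=
        mul_le_mul_of_nonneg_left (tail_bound hb1 hrec hb0 hδ hδ0 n hn) (le_of_lt hbn)
  _ = 2 * b n / b (n + 1) := by ring

lemma norm_bound (n : ℕ) (hn : 1 ≤ n) :
    ‖(b n : ℕ) • ((tval b δ : ℝ) : AddCircle (1:ℝ))‖ ≤ 2 / (n + 1) := by
  have hbn : (0:ℝ) < b n := by exact_mod_cast bpos hb1 hrec hb0 n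
  have hbn1 : (0:ℝ) < b (n + 1) := by exact_mod_cast bpos hb1 hrec hb0 (n + 1)
  have h1 : ((b n : ℕ) • ((tval b δ : ℝ) : AddCircle (1:ℝ)))
      = (((b n : ℝ) * tval b δ : ℝ) : AddCircle (1:ℝ)) := by
    rw [← AddCircle.coe_nsmul]
    congr 1
    simp [nsmul_eq_mul]
  rw [h1]
  have h2 : ‖(((b n : ℝ) * tval b δ : ℝ) : AddCircle (1:ℝ))‖
      ≤ |(b n : ℝ) * tval b δ - ((cseq δ n : ℤ) : ℝ)| := by
    rw [AddCircle.norm_eq]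
    simpa using round_le ((b n : ℝ) * tval b δ) (cseq δ n : ℤ)
  refine h2.trans ?_
  have h3 := key_bound hb1 hrec hb0 hδ hδ0 n hn
  push_cast at h3 ⊢
  refine h3.trans ?_
  have h4 : ((n:ℝ) + 1) * b n ≤ b (n + 1) := by
    have h5 : ((n:ℝ) + 1) * b n + 1 = b (n + 1) := by
      rw [hrec n hn]; push_cast; ring
    linarith
  rw [div_le_div_iff₀ hbn1 (by positivity)]
  nlinarith

lemma mem_G2 : ((tval b δ : ℝ) : AddCircle (1:ℝ)) ∈ Gp b 2 := by
  set T : AddCircle (1:ℝ) := ((tval b δ : ℝ) : AddCircle (1:ℝ)) with hT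
  have key : ∀ n : ℕ, ‖b (n + 1) • T‖ ^ (2:ℝ) ≤ (2 / ((n:ℝ) + 2)) ^ 2 := by
    intro n
    have h := norm_bound hb1 hrec hb0 hδ hδ0 (n + 1) (by omega)
    rw [hT]
    rw [show ((2:ℝ) : ℝ) = ((2:ℕ) : ℝ) by norm_num, Real.rpow_natCast]
    have he : ((n:ℝ) + 1 + 1) = (n:ℝ) + 2 := by ring
    push_cast at h
    rw [he] at h
    have h0 : (0:ℝ) ≤ ‖b (n + 1) • ((tval b δ : ℝ) : AddCircle (1:ℝ))‖ := norm_nonneg _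
    have h2 : (0:ℝ) < (n:ℝ) + 2 := by positivity
    nlinarith
  have hsum2 : Summable (fun n : ℕ => (2 / ((n:ℝ) + 2)) ^ 2) := by
    have h1 : Summable (fun k : ℕ => 4 * (1 / (k:ℝ) ^ 2)) :=
      (Real.summable_one_div_nat_pow.2 one_lt_two).mul_left 4
    have h2 : Summable (fun n : ℕ => 4 * (1 / (((n + 2 : ℕ)):ℝ) ^ 2)) :=
      (summable_nat_add_iff 2).2 h1
    refine h2.congr fun n => ?_
    push_cast
    rw [div_pow]
    ring
  have hsum : Summable (fun n : ℕ => ‖b (n + 1) • T‖ ^ (2:ℝ)) :=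
    Summable.of_nonneg_of_le (fun n => Real.rpow_nonneg (norm_nonneg _) 2) key hsum2
  exact (summable_nat_add_iff 1).1 hsum

end lemmas

section sep

variable {b : ℕ → ℕ} (hb1 : b 1 = 1)
    (hrec : ∀ n, 1 ≤ n → b (n + 1) = (n + 1) * b n + 1) (hb0 : b 0 = 1)
    {δ δ' : ℕ → ℕ} (hδ : ∀ m, δ m ≤ 1) (hδ' : ∀ m, δ' m ≤ 1)
    (h40 : ∀ m < 4, δ m = 0) (h40' : ∀ m < 4, δ' m = 0)

include hb1 hrec hb0 hδ hδ' h40 h40'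

lemma sep {k : ℕ} (hk4 : 4 ≤ k) (hagree : ∀ m < k, δ m = δ' m)
    (hδk : δ k = 1) (hδ'k : δ' k = 0) :
    1 / (3 * (b (k+1) : ℝ)) ≤ tval b δ - tval b δ' ∧ tval b δ - tval b δ' < 1 := by
  have hδ0 : δ 0 = 0 := h40 0 (by omega)
  have hδ0' : δ' 0 = 0 := h40' 0 (by omega)
  have hsδ := fsummable hb1 hrec hb0 hδ
  have hsδ' := fsummable hb1 hrec hb0 hδ'
  have hbk1 : (0:ℝ) < b (k + 1) := by exact_mod_cast bpos hb1 hrec hb0 (k + 1)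
  have hbk2 : (0:ℝ) < b (k + 2) := by exact_mod_cast bpos hb1 hrec hb0 (k + 2)
  set g : ℕ → ℝ := fun m => fseq b δ m - fseq b δ' m with hg
  have hgs : Summable g := hsδ.sub hsδ'
  have hD : tval b δ - tval b δ' = ∑' m, g m := by
    rw [tval, tval, hg, Summable.tsum_sub hsδ hsδ']
  have hgzero : ∀ m < k, g m = 0 := by
    intro m hm
    rcases Nat.eq_zero_or_pos m with h | h
    · subst h; simp [hg, fseq]
    · have h1 : cseq δ m = cseq δ' m := cseq_congr' hagree m (by omega)
      simp only [hg, fseq, if_neg (by omega : ¬ m = 0)]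
      rw [hagree m hm, h1]
      ring
  have hgk : g k = 1 / b (k + 1) := by
    have hbk : (0:ℝ) < b k := by exact_mod_cast bpos hb1 hrec hb0 k
    have h1 : cseq δ k = cseq δ' k := cseq_congr' hagree k le_rfl
    simp only [hg, fseq, if_neg (by omega : ¬ k = 0)]
    rw [hδk, hδ'k, h1]
    push_cast
    field_simp
    ring
  have hsplit : (∑' m, g m)
      = ∑ m ∈ Finset.range (k+1), g m + ∑' m, g (m + (k+1)) :=
    (Summable.sum_add_tsum_nat_add (k+1) hgs).symm
  have hfin : ∑ m ∈ Finset.range (k+1), g m = 1 / b (k + 1) := by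
    rw [Finset.sum_range_succ]
    rw [Finset.sum_eq_zero (fun m hm => hgzero m (Finset.mem_range.1 hm)), hgk, zero_add]
  have htail : |∑' m, g (m + (k+1))| ≤ 4 / b (k + 2) := by
    have hs1 : Summable (fun m => fseq b δ (m + (k+1))) :=
      (summable_nat_add_iff (k+1)).2 hsδ
    have hs2 : Summable (fun m => fseq b δ' (m + (k+1))) :=
      (summable_nat_add_iff (k+1)).2 hsδ'
    have he : ∑' m, g (m + (k+1))
        = (∑' m, fseq b δ (m + (k+1))) - ∑' m, fseq b δ' (m + (k+1)) := by
      rw [hg, ← Summable.tsum_sub hs1 hs2]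
    rw [he]
    have t1 := tail_bound hb1 hrec hb0 hδ hδ0 (k+1) (by omega)
    have t2 := tail_bound hb1 hrec hb0 hδ' hδ0' (k+1) (by omega)
    calc |(∑' m, fseq b δ (m + (k+1))) - ∑' m, fseq b δ' (m + (k+1))|
        ≤ |∑' m, fseq b δ (m + (k+1))| + |∑' m, fseq b δ' (m + (k+1))| := abs_sub _ _
    _ ≤ 2 / b (k + 2) + 2 / b (k + 2) := add_le_add t1 t2
    _ = 4 / b (k + 2) := by ring
  have hb2b1 : 6 * (b (k+1) : ℝ) ≤ b (k + 2) := by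
    have h1 : b (k + 2) = (k + 2) * b (k + 1) + 1 := hrec (k + 1) (by omega)
    have h2 : 6 * b (k + 1) ≤ (k + 2) * b (k + 1) + 1 := by
      have : 6 ≤ k + 2 := by omega
      nlinarith [bpos hb1 hrec hb0 (k+1)]
    exact_mod_cast h1 ▸ h2
  have htail' : |∑' m, g (m + (k+1))| ≤ 2 / (3 * b (k + 1)) := by
    refine htail.trans ?_
    rw [div_le_div_iff₀ hbk2 (by positivity)]
    nlinarith
  have habs := abs_le.1 htail'
  have hb16 : (16:ℝ) ≤ b (k + 1) := by
    have h1 : 2 ^ k ≤ b (k + 1) := bpow hb1 hrec hb0 k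
    have h2 : 16 ≤ 2 ^ k := by
      calc (16:ℕ) = 2 ^ 4 := by norm_num
      _ ≤ 2 ^ k := Nat.pow_le_pow_right (by norm_num) hk4
    exact_mod_cast le_trans h2 h1
  constructor
  · rw [hD, hsplit, hfin]
    have : 1 / (3 * (b (k+1):ℝ)) = 1 / b (k+1) - 2 / (3 * b (k+1)) := by
      field_simp; ring
    rw [this]
    linarith [habs.1]
  · rw [hD, hsplit, hfin]
    have h1 : 1 / (b (k+1):ℝ) ≤ 1 / 16 := by
      rw [div_le_div_iff₀ hbk1 (by norm_num)]; linarith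
    have h2 : 2 / (3 * (b (k+1):ℝ)) ≤ 2 / 48 := by
      rw [div_le_div_iff₀ (by positivity) (by norm_num)]; linarith
    linarith [habs.2]

lemma tne {k : ℕ} (hk4 : 4 ≤ k) (hagree : ∀ m < k, δ m = δ' m)
    (hδk : δ k = 1) (hδ'k : δ' k = 0) :
    ((tval b δ : ℝ) : AddCircle (1:ℝ)) ≠ ((tval b δ' : ℝ) : AddCircle (1:ℝ)) := by
  intro heq
  have hbk1 : (0:ℝ) < b (k + 1) := by exact_mod_cast bpos hb1 hrec hb0 (k + 1)
  obtain ⟨hlo, hhi⟩ := sep hb1 hrec hb0 hδ hδ' h40 h40' hk4 hagree hδk hδ'k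
  have h0 : ((tval b δ - tval b δ' : ℝ) : AddCircle (1:ℝ)) = 0 := by
    rw [AddCircle.coe_sub, heq, sub_self]
  rw [AddCircle.coe_eq_zero_iff] at h0
  obtain ⟨z, hz⟩ := h0
  rw [zsmul_eq_mul, mul_one] at hz
  have hpos : (0:ℝ) < (z:ℝ) := by
    rw [hz]
    have h9 : (0:ℝ) < 1 / (3 * (b (k+1) : ℝ)) := by positivity
    linarith
  have hz1 : 1 ≤ z := by exact_mod_cast Int.cast_pos.1 hpos
  have : (1:ℝ) ≤ (z:ℝ) := by exact_mod_cast hz1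
  linarith [hz ▸ this]

end sep

end ET

set_option maxHeartbeats 1600000 in
/-- For the Erdős–Taylor sequence with `aₙ = n + 1` (`b₁ = 1`, `bₙ₊₁ = (n+1) bₙ + 1`),
`G₂(b)` is uncountable while `G₁(b) = {0}`. -/
theorem stmt11 (b : ℕ → ℕ) (hb1 : b 1 = 1)
    (hrec : ∀ n, 1 ≤ n → b (n + 1) = (n + 1) * b n + 1) (hb0 : b 0 = 1) :
    ¬ (Gp b 2).Countable ∧ Gp b 1 = {0} := by
  classical
  constructor
  · -- uncountability of G₂
    intro hcount
    obtain ⟨D, hD⟩ : ∃ D : Set ℕ → ℕ → ℕ,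
        ∀ S m, D S m = if 4 ≤ m ∧ (m - 4) ∈ S then 1 else 0 :=
      ⟨fun S m => if 4 ≤ m ∧ (m - 4) ∈ S then 1 else 0, fun _ _ => rfl⟩
    have hδ : ∀ S m, D S m ≤ 1 := by
      intro S m
      rw [hD]
      split <;> omega
    have h40 : ∀ S, ∀ m < 4, D S m = 0 := by
      intro S m hm
      rw [hD]
      rw [if_neg (by rintro ⟨h1, -⟩; omega)]
    set F : Set ℕ → AddCircle (1:ℝ) := fun S => ((ET.tval b (D S) : ℝ) : AddCircle (1:ℝ))
      with hF
    have hFmem : ∀ S, F S ∈ Gp b 2 := fun S =>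
      ET.mem_G2 hb1 hrec hb0 (hδ S) (h40 S 0 (by omega))
    have hFinj : Function.Injective F := by
      intro S S' hFS
      by_contra hne
      have hex : ∃ m, D S m ≠ D S' m := by
        have h : ∃ n, ¬ (n ∈ S ↔ n ∈ S') := by
          by_contra hc
          push_neg at hc
          exact hne (Set.ext fun n => hc n)
        obtain ⟨n, hn⟩ := h
        refine ⟨n + 4, ?_⟩
        rw [hD, hD]
        have h4 : 4 ≤ n + 4 := by omega
        have h5 : n + 4 - 4 = n := by omega
        rw [h5]
        by_cases h1 : n ∈ S
        · have h2 : n ∉ S' := fun h2 => hn (iff_of_true h1 h2)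
          rw [if_pos ⟨h4, h1⟩, if_neg (by rintro ⟨-, h3⟩; exact h2 h3)]
          omega
        · have h2 : n ∈ S' := by
            by_contra h2
            exact hn (iff_of_false h1 h2)
          rw [if_neg (by rintro ⟨-, h3⟩; exact h1 h3), if_pos ⟨h4, h2⟩]
          omega
      obtain ⟨k, hkne, hmin⟩ : ∃ k, (D S k ≠ D S' k) ∧ ∀ m < k, D S m = D S' m :=
        ⟨Nat.find hex, Nat.find_spec hex, fun m hm => not_not.mp (Nat.find_min hex hm)⟩
      have hk4 : 4 ≤ k := by
        by_contra h
        exact hkne (by rw [h40 S k (by omega), h40 S' k (by omega)])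
      rcases Nat.lt_or_ge (D S k) 1 with h1 | h1
      · -- D S k = 0, D S' k = 1
        have e0 : D S k = 0 := Nat.lt_one_iff.mp h1
        have e1 : D S' k = 1 := by
          rcases Nat.le_one_iff_eq_zero_or_eq_one.mp (hδ S' k) with h2 | h2
          · exact absurd (e0.trans h2.symm) hkne
          · exact h2
        exact ET.tne hb1 hrec hb0 (hδ S') (hδ S) (h40 S') (h40 S) hk4
          (fun m hm => (hmin m hm).symm) e1 e0 hFS.symm
      · -- D S k = 1, D S' k = 0
        have e1 : D S k = 1 := le_antisymm (hδ S k) h1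
        have e0 : D S' k = 0 := by
          rcases Nat.le_one_iff_eq_zero_or_eq_one.mp (hδ S' k) with h2 | h2
          · exact h2
          · exact absurd (e1.trans h2.symm) hkne
        exact ET.tne hb1 hrec hb0 (hδ S) (hδ S') (h40 S) (h40 S') hk4
          hmin e1 e0 hFS
    obtain ⟨enc, henc⟩ := Set.countable_iff_exists_injective.1 hcount
    have hginj : Function.Injective (fun S => enc ⟨F S, hFmem S⟩) := by
      intro S S' h
      exact hFinj (Subtype.ext_iff.1 (henc h))
    exact Function.cantor_injective _ hginj
  · -- G₁ = {0}
    ext t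
    simp only [Set.mem_singleton_iff, Gp, Set.mem_setOf_eq]
    constructor
    · intro ht
      have hs : Summable (fun n => ‖b n • t‖) := by
        simpa [Real.rpow_one] using ht
      by_contra h0
      have hpos : 0 < ‖t‖ := norm_pos_iff.2 h0
      have htend : Filter.Tendsto (fun n => ‖b n • t‖) Filter.atTop (nhds 0) :=
        hs.tendsto_atTop_zero
      have hev : ∀ᶠ n in Filter.atTop, ‖b n • t‖ < ‖t‖ / 2 :=
        htend.eventually_lt_const (half_pos hpos)
      obtain ⟨N, hN⟩ := Filter.eventually_atTop.1 hev
      have key : ∀ n : ℕ, 1 ≤ n → ‖t‖ ≤ ‖b (n+1) • t‖ + ((n:ℝ) + 1) * ‖b n • t‖ := by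
        intro n hn
        have hsmul : b (n+1) • t = (n+1) • (b n • t) + t := by
          rw [hrec n hn, mul_comm (n+1) (b n), add_nsmul, one_nsmul, mul_nsmul]
        have ht' : t = b (n+1) • t - (n+1) • (b n • t) := by
          rw [hsmul]; abel
        calc ‖t‖ = ‖b (n+1) • t - (n+1) • (b n • t)‖ := by rw [← ht']
        _ ≤ ‖b (n+1) • t‖ + ‖(n+1) • (b n • t)‖ := norm_sub_le _ _
        _ ≤ ‖b (n+1) • t‖ + ((n:ℝ) + 1) * ‖b n • t‖ := by
            have := norm_nsmul_le (n := n+1) (a := b n • t)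
            push_cast at this
            linarith
      set M := max N 1 with hM
      have hlow : ∀ n : ℕ, ‖t‖ / (2 * ((n:ℝ) + M + 1)) ≤ ‖b (n + M) • t‖ := by
        intro n
        have hnM : 1 ≤ n + M := by omega
        have h1 := key (n + M) hnM
        have h2 : ‖b (n + M + 1) • t‖ < ‖t‖ / 2 := hN (n + M + 1) (by omega)
        have h3 : ((n + M : ℕ):ℝ) + 1 = (n:ℝ) + M + 1 := by push_cast; ring
        rw [h3] at h1
        have h4 : (0:ℝ) < (n:ℝ) + M + 1 := by positivity
        have h5 : ‖t‖ / 2 ≤ ((n:ℝ) + M + 1) * ‖b (n + M) • t‖ := by linarith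
        rw [div_le_iff₀ (by positivity)]
        calc ‖t‖ = 2 * (‖t‖ / 2) := by ring
        _ ≤ 2 * (((n:ℝ) + M + 1) * ‖b (n + M) • t‖) := by linarith
        _ = ‖b (n + M) • t‖ * (2 * ((n:ℝ) + M + 1)) := by ring
      have hs' : Summable (fun n => ‖b (n + M) • t‖) :=
        (summable_nat_add_iff M).2 hs
      have hsum1 : Summable (fun n : ℕ => ‖t‖ / (2 * ((n:ℝ) + M + 1))) :=
        Summable.of_nonneg_of_le (fun n => by positivity) hlow hs'
      have hsum2 : Summable (fun n : ℕ => 1 / ((n:ℝ) + M + 1)) := by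
        have := hsum1.mul_left (2 / ‖t‖)
        refine this.congr fun n => ?_
        field_simp
      have hsum3 : Summable (fun n : ℕ => 1 / (((n + (M + 1)) : ℕ):ℝ)) := by
        refine hsum2.congr fun n => ?_
        push_cast
        ring_nf
      have hsum4 : Summable (fun n : ℕ => 1 / (n:ℝ)) :=
        (summable_nat_add_iff (M + 1)).1 hsum3
      exact Real.not_summable_one_div_natCast hsum4
    · intro ht
      subst ht
      have : (fun n => ‖b n • (0 : AddCircle (1:ℝ))‖ ^ (1:ℝ)) = fun _ => 0 := by
        funext n
        rw [smul_zero, norm_zero, Real.rpow_one]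
      rw [this]
      exact summable_zero
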